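/- Then the polynomial P_n(x) = Σ_{j=0}^{n} ( (n+ν)! (j+ν+μ)! / ((n+ν+μ)! (j+ν)!) ) a_j x^j is a monic polynomial of degree n, and ∫₀^∞ P_n(x) Q_k(x) dx = 0 for every k = 0,…,n−1. -/

import Mathlib

open MeasureTheory Set

lemma prod_nat_fact (m k : ℕ) :
    m.factorial * ∏ j ∈ Finset.range (k+1), (m+1+j) = (m+k+1).factorial := by
  induction k with
  | zero => simp [Nat.factorial_succ]; ring
  | succ k ih =>
    rw [Finset.prod_range_succ, ← mul_assoc, ih]
    have h : m+(k+1)+1 = (m+k+1)+1 := by ring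
    conv_rhs => rw [h, Nat.factorial_succ]
    ring

lemma betaNat (m k : ℕ) :
    ∫ t in Ioo (0:ℝ) 1, t ^ m * (1 - t) ^ k
      = (Nat.factorial m * Nat.factorial k : ℝ) / Nat.factorial (m + k + 1) := by
  rw [← integral_Ioc_eq_integral_Ioo, ← intervalIntegral.integral_of_le zero_le_one]
  have hc : ((∫ t in (0:ℝ)..1, t ^ m * (1 - t) ^ k : ℝ) : ℂ)
      = Complex.betaIntegral ((m:ℂ)+1) ((k:ℂ)+1) := by
    rw [Complex.betaIntegral, ← intervalIntegral.integral_ofReal]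
    apply intervalIntegral.integral_congr
    intro x hx
    push_cast
    rw [add_sub_cancel_right, add_sub_cancel_right, Complex.cpow_natCast,
      Complex.cpow_natCast]
  have hb := Complex.betaIntegral_eval_nat_add_one_right
    (u := (m:ℂ)+1) (by simp; positivity) k
  have hprod : (∏ j ∈ Finset.range (k+1), ((m:ℂ)+1+(j:ℕ)))
      = ((m+k+1).factorial : ℂ) / (m.factorial : ℂ) := by
    have := prod_nat_fact m k
    have h2 : (m.factorial : ℂ) * ∏ j ∈ Finset.range (k+1), ((m:ℂ)+1+(j:ℕ))
        = ((m+k+1).factorial : ℂ) := by exact_mod_cast this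
    have h3 : (m.factorial : ℂ) ≠ 0 := by exact_mod_cast m.factorial_pos.ne'
    rw [eq_div_iff h3]
    linear_combination h2
  apply Complex.ofReal_injective
  rw [hc, hb, hprod]
  have h1 : ((m+k+1).factorial : ℂ) ≠ 0 := by exact_mod_cast (m+k+1).factorial_pos.ne'
  have h2 : (m.factorial : ℂ) ≠ 0 := by exact_mod_cast m.factorial_pos.ne'
  push_cast
  field_simp

lemma integral_scale (f : ℝ → ℝ) {t : ℝ} (ht : 0 < t) :
    ∫ x in Ioi (0:ℝ), f x = t * ∫ y in Ioi (0:ℝ), f (t * y) := by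
  have h := integral_comp_mul_left_Ioi f 0 ht
  simp only [mul_zero, smul_eq_mul] at h
  rw [h, ← mul_assoc, mul_inv_cancel₀ (ne_of_gt ht), one_mul]

lemma integrableOn_scale {f : ℝ → ℝ} {t : ℝ} (ht : 0 < t)
    (hf : IntegrableOn (fun y => f (t * y)) (Ioi 0)) : IntegrableOn f (Ioi 0) := by
  have h := (integrableOn_Ioi_comp_mul_left_iff f 0 ht).1 hf
  simpa using h

/-- The average characteristic polynomial after multiplication by a truncated
unitary matrix: `P_n(x) = Σ_j ((n+ν)!(j+ν+μ)!/((n+ν+μ)!(j+ν)!)) a_j x^j` is a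
monic polynomial of degree `n` orthogonal to all the transformed dual
functions `Q_k`, `k < n`. -/
theorem stmt13
    (n : ℕ) (hn : 1 ≤ n) (ν μ : ℕ) (hμ : 1 ≤ μ)
    (q : ℕ → ℝ → ℝ) (hqmeas : ∀ k < n, Measurable (q k))
    (hqint : ∀ k < n, ∀ j ≤ n, IntegrableOn (fun x => x ^ j * |q k x|) (Ioi 0))
    (Q : ℕ → ℝ → ℝ)
    (hQ : ∀ k < n, ∀ y ∈ Ioi (0:ℝ),
      Q k y = ∫ t in Ioo (0:ℝ) 1, t ^ ν * (1 - t) ^ (μ - 1) * q k (y / t) / t)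
    (a : ℕ → ℝ) (hmonic : a n = 1)
    (pn : ℝ → ℝ)
    (hpn : ∀ x : ℝ, pn x = ∑ j ∈ Finset.range (n + 1), a j * x ^ j)
    (horth : ∀ k < n, ∫ x in Ioi (0:ℝ), pn x * q k x = 0)
    (Pn : ℝ → ℝ)
    (hPn : ∀ x : ℝ, Pn x = ∑ j ∈ Finset.range (n + 1),
      (Nat.factorial (n + ν) : ℝ) * (Nat.factorial (j + ν + μ) : ℝ) /
        ((Nat.factorial (n + ν + μ) : ℝ) * (Nat.factorial (j + ν) : ℝ)) * a j * x ^ j) :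
    (∃ P : Polynomial ℝ, P.Monic ∧ P.natDegree = n ∧ ∀ x : ℝ, Pn x = P.eval x) ∧
    ∀ k < n,
      IntegrableOn (fun x => Pn x * Q k x) (Ioi 0) ∧
      ∫ x in Ioi (0:ℝ), Pn x * Q k x = 0 := by
  set c : ℕ → ℝ := fun j => (Nat.factorial (n + ν) : ℝ) * (Nat.factorial (j + ν + μ) : ℝ) /
        ((Nat.factorial (n + ν + μ) : ℝ) * (Nat.factorial (j + ν) : ℝ)) with hc
  constructor
  · set P : Polynomial ℝ := ∑ j ∈ Finset.range (n+1), Polynomial.C (c j * a j) * Polynomial.X ^ j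
      with hP
    have hdeg : P.natDegree ≤ n := by
      apply Polynomial.natDegree_sum_le_of_forall_le
      intro j hj
      refine le_trans (Polynomial.natDegree_C_mul_le _ _) ?_
      simpa [Polynomial.natDegree_X_pow] using Nat.lt_succ_iff.1 (Finset.mem_range.1 hj)
    have hcn : P.coeff n = 1 := by
      rw [hP, Polynomial.finset_sum_coeff]
      simp only [Polynomial.coeff_C_mul, Polynomial.coeff_X_pow]
      rw [Finset.sum_eq_single n]
      · have : c n = 1 := by
          rw [hc]
          have h1 : ((Nat.factorial (n + ν + μ) : ℝ) * (Nat.factorial (n + ν) : ℝ)) ≠ 0 := by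
            positivity
          field_simp
        simp [this, hmonic]
      · intro b _ hb; simp [hb.symm]
      · intro h; exact absurd (Finset.self_mem_range_succ n) h
    have hmon : P.Monic := Polynomial.monic_of_natDegree_le_of_coeff_eq_one n hdeg hcn
    refine ⟨P, hmon, Polynomial.natDegree_eq_of_le_of_coeff_ne_zero hdeg (by rw [hcn]; norm_num), ?_⟩
    intro x
    rw [hPn, hP, Polynomial.eval_finset_sum]
    exact Finset.sum_congr rfl fun j _ => by simp [mul_assoc, hc]
  · intro k hk
    refine ?_
    have mqk : Measurable (q k) := hqmeas k hk
    -- integrability of moments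
    have hint : ∀ j ≤ n, IntegrableOn (fun y => y ^ j * q k y) (Ioi 0) := by
      intro j hj
      refine Integrable.mono' (hqint k hk j hj) ?_ ?_
      · exact ((measurable_id.pow_const j).mul mqk).aestronglyMeasurable
      · refine (ae_restrict_iff' measurableSet_Ioi).2 (Filter.Eventually.of_forall fun x hx => ?_)
        rw [Real.norm_eq_abs, abs_mul, abs_of_nonneg (pow_nonneg (le_of_lt hx) j)]
    set m : ℕ → ℝ := fun j => ∫ y in Ioi (0:ℝ), y ^ j * q k y with hm
    set M : ℕ → ℝ := fun j => ∫ y in Ioi (0:ℝ), y ^ j * |q k y| with hM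
    have hM0 : ∀ j, 0 ≤ M j := fun j =>
      setIntegral_nonneg measurableSet_Ioi fun y hy => mul_nonneg (pow_nonneg (le_of_lt hy) j) (abs_nonneg _)
    -- orthogonality in moment form
    have hsum0 : ∑ j ∈ Finset.range (n + 1), a j * m j = 0 := by
      have h1 : ∫ x in Ioi (0:ℝ), pn x * q k x
          = ∑ j ∈ Finset.range (n + 1), a j * m j := by
        have hfe : (fun x => pn x * q k x)
            = fun x => ∑ j ∈ Finset.range (n + 1), a j * (x ^ j * q k x) := by
          funext x
          rw [hpn, Finset.sum_mul]
          exact Finset.sum_congr rfl fun j _ => by ring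
        rw [hfe]
        rw [integral_finset_sum _ fun j hj =>
          ((hint j (Nat.lt_succ_iff.1 (Finset.mem_range.1 hj))).const_mul _)]
        exact Finset.sum_congr rfl fun j _ => integral_const_mul _ _
      rw [← h1]; exact horth k hk
    -- product measure
    set ρ : Measure (ℝ × ℝ) := (volume.restrict (Ioo (0:ℝ) 1)).prod (volume.restrict (Ioi (0:ℝ)))
      with hρ
    have hj_meas : ∀ j : ℕ, Measurable (fun p : ℝ × ℝ =>
        p.2 ^ j * (p.1 ^ ν * (1 - p.1) ^ (μ - 1) * q k (p.2 / p.1) / p.1)) := by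
      intro j
      exact (measurable_snd.pow_const j).mul
        ((((measurable_fst.pow_const ν).mul
          ((measurable_const.sub measurable_fst).pow_const (μ-1))).mul
          (mqk.comp (measurable_snd.div measurable_fst))).div measurable_fst)
    have hj_int : ∀ j ≤ n, Integrable (fun p : ℝ × ℝ =>
        p.2 ^ j * (p.1 ^ ν * (1 - p.1) ^ (μ - 1) * q k (p.2 / p.1) / p.1)) ρ := by
      intro j hjn
      rw [hρ, integrable_prod_iff ((hj_meas j).aestronglyMeasurable)]
      constructor
      · refine (ae_restrict_iff' measurableSet_Ioo).2 (Filter.Eventually.of_forall fun t ht => ?_)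
        have ht0 : t ≠ 0 := ne_of_gt ht.1
        have h1 : IntegrableOn (fun x => x ^ j * q k (x / t)) (Ioi 0) := by
          apply integrableOn_scale ht.1
          refine IntegrableOn.congr_fun ((hint j hjn).const_mul (t ^ j)) (fun y _ => ?_)
            measurableSet_Ioi
          show t ^ j * (y ^ j * q k y) = (t * y) ^ j * q k (t * y / t)
          rw [mul_div_cancel_left₀ _ ht0, mul_pow]; ring
        have h2 := h1.const_mul (t ^ ν * (1 - t) ^ (μ - 1) / t)
        refine h2.congr ((ae_restrict_iff' measurableSet_Ioi).2
          (Filter.Eventually.of_forall fun x _ => by ring))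
      · have hcomp : ∀ t ∈ Ioo (0:ℝ) 1,
            (∫ x in Ioi (0:ℝ), ‖x ^ j * (t ^ ν * (1 - t) ^ (μ - 1) * q k (x / t) / t)‖)
              = t ^ (ν + j) * (1 - t) ^ (μ - 1) * M j := by
          intro t ht
          have ht0 : t ≠ 0 := ne_of_gt ht.1
          have e1 : ∀ x ∈ Ioi (0:ℝ), ‖x ^ j * (t ^ ν * (1 - t) ^ (μ - 1) * q k (x / t) / t)‖
              = (t ^ ν * (1 - t) ^ (μ - 1) / t) * (x ^ j * |q k (x / t)|) := by
            intro x hx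
            rw [Real.norm_eq_abs, abs_mul, abs_div, abs_mul, abs_mul,
              abs_of_nonneg (pow_nonneg (le_of_lt hx) j),
              abs_of_nonneg (pow_nonneg (le_of_lt ht.1) ν),
              abs_of_nonneg (pow_nonneg (by linarith [ht.2] : (0:ℝ) ≤ 1 - t) (μ - 1)),
              abs_of_pos ht.1]
            ring
          have hstep1 : (∫ x in Ioi (0:ℝ), x ^ j * |q k (x / t)|)
              = t * ∫ y in Ioi (0:ℝ), (t * y) ^ j * |q k (t * y / t)| :=
            integral_scale (fun x => x ^ j * |q k (x / t)|) ht.1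
          have hstep2 : (∫ y in Ioi (0:ℝ), (t * y) ^ j * |q k (t * y / t)|)
              = ∫ y in Ioi (0:ℝ), t ^ j * (y ^ j * |q k y|) :=
            setIntegral_congr_fun measurableSet_Ioi fun y _ => by
              rw [mul_div_cancel_left₀ _ ht0, mul_pow]; ring
          rw [setIntegral_congr_fun measurableSet_Ioi e1, integral_const_mul, hstep1, hstep2,
            integral_const_mul]
          simp only [hM]
          rw [pow_add]
          field_simp
        have hb : IntegrableOn (fun _ : ℝ => M j) (Ioo (0:ℝ) 1) :=
          integrableOn_const measure_Ioo_lt_top.ne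
        refine Integrable.mono' hb
          (((hj_meas j).aestronglyMeasurable.norm).integral_prod_right') ?_
        refine (ae_restrict_iff' measurableSet_Ioo).2 (Filter.Eventually.of_forall fun t ht => ?_)
        simp only
        rw [hcomp t ht, Real.norm_eq_abs,
          abs_of_nonneg (mul_nonneg (mul_nonneg (pow_nonneg (le_of_lt ht.1) _)
            (pow_nonneg (by linarith [ht.2] : (0:ℝ) ≤ 1 - t) _)) (hM0 j))]
        obtain ⟨ht1, ht2⟩ := ht
        have h1 : t ^ (ν + j) ≤ 1 := pow_le_one₀ (le_of_lt ht1) (le_of_lt ht2)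
        have h2 : (1 - t) ^ (μ - 1) ≤ 1 :=
          pow_le_one₀ (by linarith) (by linarith)
        have h3 : t ^ (ν + j) * (1 - t) ^ (μ - 1) ≤ 1 :=
          mul_le_one₀ h1 (pow_nonneg (show (0:ℝ) ≤ 1 - t by linarith) _) h2
        nlinarith [hM0 j, h3]
    have hgInt : Integrable (fun p : ℝ × ℝ =>
        Pn p.2 * (p.1 ^ ν * (1 - p.1) ^ (μ - 1) * q k (p.2 / p.1) / p.1)) ρ := by
      have he : (fun p : ℝ × ℝ => Pn p.2 * (p.1 ^ ν * (1 - p.1) ^ (μ - 1) * q k (p.2 / p.1) / p.1))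
          = fun p => ∑ j ∈ Finset.range (n+1),
              (c j * a j) * (p.2 ^ j * (p.1 ^ ν * (1 - p.1) ^ (μ - 1) * q k (p.2 / p.1) / p.1)) := by
        funext p
        rw [hPn, Finset.sum_mul]
        exact Finset.sum_congr rfl fun j _ => by ring
      rw [he]
      exact integrable_finset_sum _ fun j hj =>
        ((hj_int j (Nat.lt_succ_iff.1 (Finset.mem_range.1 hj))).const_mul _)
    have hPQ_int : IntegrableOn (fun x => Pn x * Q k x) (Ioi 0) := by
      rw [hρ] at hgInt
      have h5 := hgInt.integral_prod_right
      refine h5.congr ((ae_restrict_iff' measurableSet_Ioi).2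
        (Filter.Eventually.of_forall fun x hx => ?_))
      simp only
      rw [integral_const_mul, ← hQ k hk x hx]
    refine ⟨hPQ_int, ?_⟩
    rw [hρ] at hgInt
    have hswap := integral_integral_swap (μ := volume.restrict (Ioo (0:ℝ) 1))
      (ν := volume.restrict (Ioi (0:ℝ)))
      (f := fun t x => Pn x * (t ^ ν * (1 - t) ^ (μ - 1) * q k (x / t) / t)) hgInt
    have lhs_eq : ∫ x in Ioi (0:ℝ), Pn x * Q k x
        = ∫ x in Ioi (0:ℝ), ∫ t in Ioo (0:ℝ) 1,
            Pn x * (t ^ ν * (1 - t) ^ (μ - 1) * q k (x / t) / t) := by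
      refine setIntegral_congr_fun measurableSet_Ioi fun x hx => ?_
      rw [hQ k hk x hx, ← integral_const_mul]
    rw [lhs_eq, ← hswap]
    -- inner integral computation
    have hinner : ∀ t ∈ Ioo (0:ℝ) 1,
        (∫ x in Ioi (0:ℝ), Pn x * (t ^ ν * (1 - t) ^ (μ - 1) * q k (x / t) / t))
          = ∑ j ∈ Finset.range (n+1),
              (c j * a j * m j) * (t ^ (ν + j) * (1 - t) ^ (μ - 1)) := by
      intro t ht
      have ht0 : t ≠ 0 := ne_of_gt ht.1
      have e1 : ∀ x ∈ Ioi (0:ℝ), Pn x * (t ^ ν * (1 - t) ^ (μ - 1) * q k (x / t) / t)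
          = (t ^ ν * (1 - t) ^ (μ - 1) / t) * (Pn x * q k (x / t)) := fun x _ => by ring
      have hstep1 : (∫ x in Ioi (0:ℝ), Pn x * q k (x / t))
          = t * ∫ y in Ioi (0:ℝ), Pn (t * y) * q k (t * y / t) :=
        integral_scale (fun x => Pn x * q k (x / t)) ht.1
      have hstep2 : (∫ y in Ioi (0:ℝ), Pn (t * y) * q k (t * y / t))
          = ∫ y in Ioi (0:ℝ), ∑ j ∈ Finset.range (n+1),
              (c j * a j * t ^ j) * (y ^ j * q k y) := by
        refine setIntegral_congr_fun measurableSet_Ioi fun y _ => ?_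
        rw [mul_div_cancel_left₀ _ ht0, hPn, Finset.sum_mul]
        exact Finset.sum_congr rfl fun j _ => by rw [mul_pow]; ring
      rw [setIntegral_congr_fun measurableSet_Ioi e1, integral_const_mul, hstep1, hstep2,
        integral_finset_sum _ fun j hj =>
          ((hint j (Nat.lt_succ_iff.1 (Finset.mem_range.1 hj))).const_mul _)]
      simp only [hm]
      rw [Finset.mul_sum, Finset.mul_sum]
      refine Finset.sum_congr rfl fun j _ => ?_
      rw [integral_const_mul, pow_add]
      field_simp
    rw [setIntegral_congr_fun measurableSet_Ioo hinner]
    have hci : ∀ j ∈ Finset.range (n+1), IntegrableOn (fun t : ℝ =>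
        (c j * a j * m j) * (t ^ (ν + j) * (1 - t) ^ (μ - 1))) (Ioo (0:ℝ) 1) := by
      intro j _
      apply IntegrableOn.mono_set _ Ioo_subset_Icc_self
      exact (continuous_const.mul ((continuous_pow (ν+j)).mul
        ((continuous_const.sub continuous_id).pow (μ-1)))).integrableOn_Icc
    rw [integral_finset_sum _ hci]
    have hterm : ∀ j ∈ Finset.range (n+1),
        (∫ t in Ioo (0:ℝ) 1, (c j * a j * m j) * (t ^ (ν + j) * (1 - t) ^ (μ - 1)))
          = ((Nat.factorial (n + ν) : ℝ) * (Nat.factorial (μ - 1) : ℝ)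
              / (Nat.factorial (n + ν + μ) : ℝ)) * (a j * m j) := by
      intro j _
      rw [integral_const_mul, betaNat]
      have e4 : ν + j + (μ - 1) + 1 = j + ν + μ := by omega
      have e5 : ν + j = j + ν := by omega
      rw [e4, e5]
      simp only [hc]
      have h1 : ((n+ν+μ).factorial : ℝ) ≠ 0 := Nat.cast_ne_zero.2 (Nat.factorial_ne_zero _)
      have h2 : ((j+ν).factorial : ℝ) ≠ 0 := Nat.cast_ne_zero.2 (Nat.factorial_ne_zero _)
      have h3 : ((j+ν+μ).factorial : ℝ) ≠ 0 := Nat.cast_ne_zero.2 (Nat.factorial_ne_zero _)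
      field_simp
    rw [Finset.sum_congr rfl hterm, ← Finset.mul_sum, hsum0, mul_zero]
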